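/- In the discrete setting, if for every j ∈ {0,…,M−1} the summand 2 Re⟨χ̃_{j+1}, (Ũ_j(ε') − Ũ_j(ε)) ψ̃'_j⟩ − 2 Re⟨χ̂_{j+1}, (Û_j(ε') − Û_j(ε)) ψ̂'_j⟩ − β Δt ((ε'_j)² − (ε_j)²) is nonnegative, then J_{Δt}(ε') ≥ J_{Δt}(ε); i.e. any discrete update whose per-time-step contributions are nonnegative does not decrease the time-discretized selectivity functional. -/

import Mathlib

noncomputable section

open Matrix

/-- The Strang splitting propagator
`U = exp(i H Δt/2) · exp(i ε_j μ Δt) · exp(i H Δt/2)`. -/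
def strangU {n : ℕ} (H μ : Matrix (Fin n) (Fin n) ℂ) (Δt εj : ℝ) :
    Matrix (Fin n) (Fin n) ℂ :=
  NormedSpace.exp ((Complex.I * ((Δt : ℂ) / 2)) • H) *
  NormedSpace.exp ((Complex.I * (εj : ℂ) * (Δt : ℂ)) • μ) *
  NormedSpace.exp ((Complex.I * ((Δt : ℂ) / 2)) • H)

/-- The rank-one observable `O_{ψ₁} : x ↦ ⟨ψ₁, x⟩ ψ₁`. -/
def rankOne {n : ℕ} (ψ₁ x : EuclideanSpace ℂ (Fin n)) : EuclideanSpace ℂ (Fin n) :=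
  (inner ℂ ψ₁ x : ℂ) • ψ₁

/-- The time-discretized selectivity functional
`J_{Δt}(ε) = ⟨ψ̃_M − ψ̂_M, O_{ψ₁}(ψ̃_M − ψ̂_M)⟩ − β Δt Σ_{j<M} ε_j²`,
expressed in terms of the discrete trajectories `ψ̃, ψ̂`. -/
def Jdisc {n : ℕ} (M : ℕ) (Δt β : ℝ) (ψ₁ : EuclideanSpace ℂ (Fin n)) (ε : ℕ → ℝ)
    (ψt ψh : ℕ → EuclideanSpace ℂ (Fin n)) : ℝ :=
  (inner ℂ (ψt M - ψh M) (rankOne ψ₁ (ψt M - ψh M)) : ℂ).re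
    - β * Δt * ∑ j ∈ Finset.range M, (ε j) ^ 2

lemma exp_skew_unit {n : ℕ} (c : ℂ) (A : Matrix (Fin n) (Fin n) ℂ) (hA : A.IsHermitian)
    (hc : (starRingEnd ℂ) c = -c) :
    (NormedSpace.exp (c • A))ᴴ * NormedSpace.exp (c • A) = 1 := by
  have hskew : (c • A)ᴴ = -(c • A) := by
    rw [Matrix.conjTranspose_smul, hA.eq, ← starRingEnd_apply, hc, neg_smul]
  rw [← Matrix.exp_conjTranspose, hskew,
    ← Matrix.exp_add_of_commute _ _ ((Commute.refl (c • A)).neg_left), neg_add_cancel]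
  exact NormedSpace.exp_zero

lemma strangU_unitary {n : ℕ} {H μ : Matrix (Fin n) (Fin n) ℂ} (hH : H.IsHermitian)
    (hμ : μ.IsHermitian) (Δt e : ℝ) :
    (strangU H μ Δt e)ᴴ * strangU H μ Δt e = 1 := by
  have h1 := exp_skew_unit (Complex.I * ((Δt : ℂ) / 2)) H hH (by
    simp [Complex.conj_I, map_div₀, map_ofNat])
  have h2 := exp_skew_unit (Complex.I * (e : ℂ) * (Δt : ℂ)) μ hμ (by
    simp [Complex.conj_I])
  unfold strangU
  rw [Matrix.conjTranspose_mul, Matrix.conjTranspose_mul]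
  set E1 := NormedSpace.exp ((Complex.I * ((Δt : ℂ) / 2)) • H)
  set E2 := NormedSpace.exp ((Complex.I * (e : ℂ) * (Δt : ℂ)) • μ)
  have : E1ᴴ * (E2ᴴ * E1ᴴ) * (E1 * E2 * E1) = E1ᴴ * (E2ᴴ * ((E1ᴴ * E1) * E2) * E1) := by
    simp only [mul_assoc]
  rw [this, h1, one_mul, h2, one_mul, h1]

lemma toEuclideanLin_mul {n : ℕ} (A B : Matrix (Fin n) (Fin n) ℂ)
    (x : EuclideanSpace ℂ (Fin n)) :
    Matrix.toEuclideanLin (A * B) x = Matrix.toEuclideanLin A (Matrix.toEuclideanLin B x) := by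
  simp [Matrix.toEuclideanLin_apply, Matrix.mulVec_mulVec]

lemma inner_pres {n : ℕ} {U : Matrix (Fin n) (Fin n) ℂ} (hU : Uᴴ * U = 1)
    (x y : EuclideanSpace ℂ (Fin n)) :
    (inner ℂ (Matrix.toEuclideanLin U x) (Matrix.toEuclideanLin U y) : ℂ) = inner ℂ x y := by
  rw [← LinearMap.adjoint_inner_left, ← Matrix.toEuclideanLin_conjTranspose_eq_adjoint,
    ← toEuclideanLin_mul, hU]
  simp [Matrix.toEuclideanLin_apply]

lemma one_step {n : ℕ} {U U' : Matrix (Fin n) (Fin n) ℂ} (hU : Uᴴ * U = 1)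
    (c p p' : EuclideanSpace ℂ (Fin n)) :
    (inner ℂ (Matrix.toEuclideanLin U c)
        (Matrix.toEuclideanLin U' p' - Matrix.toEuclideanLin U p) : ℂ)
      - (inner ℂ c (p' - p) : ℂ)
      = inner ℂ (Matrix.toEuclideanLin U c) (Matrix.toEuclideanLin (U' - U) p') := by
  have h1 := inner_pres hU c p
  have h2 := inner_pres hU c p'
  have hsub : Matrix.toEuclideanLin (U' - U) p'
      = Matrix.toEuclideanLin U' p' - Matrix.toEuclideanLin U p' := by
    rw [map_sub]; rfl
  rw [hsub, inner_sub_right, inner_sub_right, inner_sub_right, h1, h2]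
  ring

/-- if every per-time-step contribution in the discrete variation
identity is nonnegative, then `J_{Δt}(ε') ≥ J_{Δt}(ε)`. -/
theorem discrete_monotonicity {n : ℕ} (M : ℕ) (Δt T β : ℝ) (hΔt : 0 < Δt)
    (hMT : M * Δt = T) (hβ : 0 < β)
    (H μt μh : Matrix (Fin n) (Fin n) ℂ) (hH : H.IsHermitian)
    (hμt : μt.IsHermitian) (hμh : μh.IsHermitian)
    (ψ₀ ψ₁ : EuclideanSpace ℂ (Fin n)) (hψ₀ : ‖ψ₀‖ = 1) (hψ₁ : ‖ψ₁‖ = 1)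
    (ε ε' : ℕ → ℝ)
    (ψt ψh ψt' ψh' χt χh : ℕ → EuclideanSpace ℂ (Fin n))
    (hψt0 : ψt 0 = ψ₀) (hψh0 : ψh 0 = ψ₀) (hψt'0 : ψt' 0 = ψ₀) (hψh'0 : ψh' 0 = ψ₀)
    (hψt : ∀ j < M, ψt (j + 1) = Matrix.toEuclideanLin (strangU H μt Δt (ε j)) (ψt j))
    (hψh : ∀ j < M, ψh (j + 1) = Matrix.toEuclideanLin (strangU H μh Δt (ε j)) (ψh j))
    (hψt' : ∀ j < M, ψt' (j + 1) = Matrix.toEuclideanLin (strangU H μt Δt (ε' j)) (ψt' j))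
    (hψh' : ∀ j < M, ψh' (j + 1) = Matrix.toEuclideanLin (strangU H μh Δt (ε' j)) (ψh' j))
    (hχt : ∀ j < M, χt (j + 1) = Matrix.toEuclideanLin (strangU H μt Δt (ε j)) (χt j))
    (hχh : ∀ j < M, χh (j + 1) = Matrix.toEuclideanLin (strangU H μh Δt (ε j)) (χh j))
    (hχtM : χt M = rankOne ψ₁ (ψt M - ψh M))
    (hχhM : χh M = rankOne ψ₁ (ψt M - ψh M))
    (hnonneg : ∀ j < M,
      0 ≤ (2 * (inner ℂ (χt (j + 1))
              (Matrix.toEuclideanLin (strangU H μt Δt (ε' j) - strangU H μt Δt (ε j))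
                (ψt' j)) : ℂ).re
           - 2 * (inner ℂ (χh (j + 1))
              (Matrix.toEuclideanLin (strangU H μh Δt (ε' j) - strangU H μh Δt (ε j))
                (ψh' j)) : ℂ).re
           - β * Δt * ((ε' j) ^ 2 - (ε j) ^ 2))) :
    Jdisc M Δt β ψ₁ ε ψt ψh ≤ Jdisc M Δt β ψ₁ ε' ψt' ψh' := by
  classical
  set F : ℕ → ℂ := fun j =>
    (inner ℂ (χt j) (ψt' j - ψt j) : ℂ) - (inner ℂ (χh j) (ψh' j - ψh j) : ℂ) with hF
  -- per-step identity
  have key : ∀ j < M, F (j + 1) - F j =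
      (inner ℂ (χt (j + 1))
        (Matrix.toEuclideanLin (strangU H μt Δt (ε' j) - strangU H μt Δt (ε j)) (ψt' j)) : ℂ)
      - (inner ℂ (χh (j + 1))
        (Matrix.toEuclideanLin (strangU H μh Δt (ε' j) - strangU H μh Δt (ε j)) (ψh' j)) : ℂ) := by
    intro j hj
    have t := one_step (U' := strangU H μt Δt (ε' j))
      (strangU_unitary hH hμt Δt (ε j)) (χt j) (ψt j) (ψt' j)
    have h := one_step (U' := strangU H μh Δt (ε' j))
      (strangU_unitary hH hμh Δt (ε j)) (χh j) (ψh j) (ψh' j)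
    simp only [hF]
    rw [hψt' j hj, hψt j hj, hχt j hj, hψh' j hj, hψh j hj, hχh j hj]
    linear_combination t - h
  have tele : ∑ j ∈ Finset.range M, (F (j + 1) - F j) = F M - F 0 :=
    Finset.sum_range_sub F M
  have hF0 : F 0 = 0 := by
    simp [hF, hψt0, hψt'0, hψh0, hψh'0]
  -- the sum of the nonnegative summands
  have hS : (0:ℝ) ≤ ∑ j ∈ Finset.range M,
      (2 * (inner ℂ (χt (j + 1))
          (Matrix.toEuclideanLin (strangU H μt Δt (ε' j) - strangU H μt Δt (ε j))
            (ψt' j)) : ℂ).re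
       - 2 * (inner ℂ (χh (j + 1))
          (Matrix.toEuclideanLin (strangU H μh Δt (ε' j) - strangU H μh Δt (ε j))
            (ψh' j)) : ℂ).re
       - β * Δt * ((ε' j) ^ 2 - (ε j) ^ 2)) :=
    Finset.sum_nonneg fun j hj => hnonneg j (Finset.mem_range.mp hj)
  have hsum : ∑ j ∈ Finset.range M,
      (2 * (inner ℂ (χt (j + 1))
          (Matrix.toEuclideanLin (strangU H μt Δt (ε' j) - strangU H μt Δt (ε j))
            (ψt' j)) : ℂ).re
       - 2 * (inner ℂ (χh (j + 1))
          (Matrix.toEuclideanLin (strangU H μh Δt (ε' j) - strangU H μh Δt (ε j))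
            (ψh' j)) : ℂ).re
       - β * Δt * ((ε' j) ^ 2 - (ε j) ^ 2))
      = 2 * (F M).re
        - β * Δt * ((∑ j ∈ Finset.range M, (ε' j) ^ 2) - ∑ j ∈ Finset.range M, (ε j) ^ 2) := by
    have step : ∀ j ∈ Finset.range M,
        (2 * (inner ℂ (χt (j + 1))
            (Matrix.toEuclideanLin (strangU H μt Δt (ε' j) - strangU H μt Δt (ε j))
              (ψt' j)) : ℂ).re
         - 2 * (inner ℂ (χh (j + 1))
            (Matrix.toEuclideanLin (strangU H μh Δt (ε' j) - strangU H μh Δt (ε j))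
              (ψh' j)) : ℂ).re
         - β * Δt * ((ε' j) ^ 2 - (ε j) ^ 2))
        = 2 * (F (j + 1) - F j).re - β * Δt * ((ε' j) ^ 2 - (ε j) ^ 2) := by
      intro j hj
      rw [key j (Finset.mem_range.mp hj), Complex.sub_re]
      ring
    rw [Finset.sum_congr rfl step, Finset.sum_sub_distrib, ← Finset.mul_sum,
      ← Complex.re_sum, tele, hF0, sub_zero]
    congr 1
    rw [← Finset.mul_sum, Finset.sum_sub_distrib]
  -- value of F M
  set a : ℂ := inner ℂ ψ₁ (ψt M - ψh M) with ha
  set a' : ℂ := inner ℂ ψ₁ (ψt' M - ψh' M) with ha'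
  have hFM : F M = (starRingEnd ℂ) a * (a' - a) := by
    simp only [hF, hχtM, hχhM, rankOne, inner_smul_left, ha, ha']
    simp only [inner_sub_right, map_sub]
    ring
  -- J in terms of a, a'
  have hJ : ∀ u : EuclideanSpace ℂ (Fin n),
      (inner ℂ u (rankOne ψ₁ u) : ℂ).re = Complex.normSq (inner ℂ ψ₁ u) := by
    intro u
    rw [rankOne, inner_smul_right, ← inner_conj_symm u ψ₁, Complex.mul_conj,
      Complex.ofReal_re]
  -- expansion of normSq
  have hexp : Complex.normSq a' = Complex.normSq a + Complex.normSq (a' - a)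
      + 2 * ((starRingEnd ℂ) a * (a' - a)).re := by
    have := Complex.normSq_add a (a' - a)
    have hre : (a * (starRingEnd ℂ) (a' - a)).re = ((starRingEnd ℂ) a * (a' - a)).re := by
      rw [← Complex.conj_re (a * (starRingEnd ℂ) (a' - a)), _root_.map_mul, Complex.conj_conj]
    rw [hre] at this
    calc Complex.normSq a' = Complex.normSq (a + (a' - a)) := by ring_nf
      _ = _ := this
  have hnn : 0 ≤ Complex.normSq (a' - a) := Complex.normSq_nonneg _
  -- assemble
  rw [hsum, hFM] at hS
  simp only [Jdisc, hJ, ← ha, ← ha']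
  nlinarith [hS, hnn, hexp]
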